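/- Let A be a finite subset of ℝᵈ with 0 ∉ A. The interior of dual(A) ∩ ℝ₊ᵈ is empty if and only if there exist nonnegative scalars η_v ≥ 0 for v ∈ A with Σ_{v∈A} η_v = 1 and Σ_{v∈A} η_v v ≤ 0 componentwise. -/

import Mathlib

/-- The interior of dual(A) ∩ ℝ₊ᵈ is empty iff some convex combination of the
elements of A is componentwise ≤ 0. -/
theorem stmt10 {d : ℕ} (A : Finset (Fin d → ℝ)) (hA : (0 : Fin d → ℝ) ∉ A) :
    interior {z : Fin d → ℝ | (∀ w ∈ A, 0 ≤ ∑ j, w j * z j) ∧ ∀ j, 0 ≤ z j} = ∅ ↔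
    ∃ η : (Fin d → ℝ) → ℝ, (∀ w ∈ A, 0 ≤ η w) ∧ (∑ w ∈ A, η w) = 1 ∧
      ∀ j, (∑ w ∈ A, η w * w j) ≤ 0 := by
  set S : Set (Fin d → ℝ) :=
    {z : Fin d → ℝ | (∀ w ∈ A, 0 ≤ ∑ j, w j * z j) ∧ ∀ j, 0 ≤ z j} with hS
  constructor
  · -- forward direction
    intro hempty
    by_contra hno
    -- the nonpositive orthant
    set T : Set (Fin d → ℝ) := {y : Fin d → ℝ | ∀ j, y j ≤ 0} with hT
    have hTclosed : IsClosed T := by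
      have : T = ⋂ j, {y : Fin d → ℝ | y j ≤ 0} := by
        ext y; simp [hT, Set.mem_iInter]
      rw [this]
      exact isClosed_iInter fun j => isClosed_le (continuous_apply j) continuous_const
    have hTconvex : Convex ℝ T := by
      intro x hx y hy a b ha hb hab j
      have hx' := hx j; have hy' := hy j
      have : (a • x + b • y) j = a * x j + b * y j := rfl
      rw [this]
      nlinarith
    have hdisj : Disjoint (convexHull ℝ (A : Set (Fin d → ℝ))) T := by
      rw [Set.disjoint_left]
      intro x hx hxT
      rw [Finset.convexHull_eq, Set.mem_setOf_eq] at hx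
      obtain ⟨η, hη0, hη1, hηx⟩ := hx
      apply hno
      refine ⟨η, hη0, hη1, fun j => ?_⟩
      have hx' : x = ∑ w ∈ A, η w • w := by
        rw [← hηx, Finset.centerMass_eq_of_sum_1 _ _ hη1]; rfl
      have : x j = ∑ w ∈ A, η w * w j := by
        rw [hx', Finset.sum_apply]; rfl
      rw [← this]; exact hxT j
    obtain ⟨f, u, v, hfu, huv, hvf⟩ :=
      geometric_hahn_banach_compact_closed (convex_convexHull ℝ _)
        (A.finite_toSet.isCompact_convexHull ℝ) hTconvex hTclosed hdisj
    have hv0 : v < 0 := by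
      have h0T : (0 : Fin d → ℝ) ∈ T := fun j => le_refl 0
      have := hvf 0 h0T
      simpa using this
    -- the candidate dual vector
    set z : Fin d → ℝ := fun j => -(f (Pi.single j 1)) with hz
    have hz0 : ∀ j, 0 ≤ z j := by
      intro j
      by_contra hneg
      push_neg at hneg
      have hc : 0 < f (Pi.single j 1) := by simpa [hz, neg_neg] using hneg
      set c := f (Pi.single j 1)
      set t : ℝ := (|v| + 1) / c with ht
      have htpos : 0 < t := div_pos (by positivity) hc
      have hmem : (Pi.single j (-t) : Fin d → ℝ) ∈ T := by
        intro k
        by_cases hk : k = j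
        · subst hk; simp [Pi.single_apply]; positivity
        · simp [Pi.single_apply, hk]
      have heq1 : (Pi.single j (-t) : Fin d → ℝ) = (-t) • (Pi.single j 1 : Fin d → ℝ) := by
        rw [← Pi.single_smul, smul_eq_mul, mul_one]
      have := hvf _ hmem
      rw [heq1, map_smul] at this
      have hfc : f (Pi.single j 1) = c := rfl
      rw [smul_eq_mul, hfc] at this
      have htc : t * c = |v| + 1 := by
        rw [ht]; field_simp
      have habs : -|v| ≤ v := neg_abs_le v
      linarith
    have hfrep : ∀ a : Fin d → ℝ, f a = ∑ j, a j * f (Pi.single j 1) := by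
      intro a
      have : a = ∑ j, Pi.single j (a j) := by
        rw [Finset.univ_sum_single]
      conv_lhs => rw [this]
      rw [map_sum]
      refine Finset.sum_congr rfl fun j _ => ?_
      have h2 : (Pi.single j (a j) : Fin d → ℝ) = a j • (Pi.single j 1 : Fin d → ℝ) := by
        rw [← Pi.single_smul, smul_eq_mul, mul_one]
      rw [h2, map_smul, smul_eq_mul]
    have hza : ∀ a ∈ A, -v < ∑ j, a j * z j := by
      intro a ha
      have hfa := hfu a (subset_convexHull ℝ _ ha)
      have : ∑ j, a j * z j = -f a := by
        rw [hfrep a, ← Finset.sum_neg_distrib]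
        refine Finset.sum_congr rfl fun j _ => ?_
        simp only [hz]
        ring
      rw [this]
      linarith
    -- choose epsilon
    set B : ℝ := ∑ a ∈ A, |∑ j, a j| with hB
    have hB0 : 0 ≤ B := Finset.sum_nonneg fun a _ => abs_nonneg _
    set ε : ℝ := (-v) / (2 * (B + 1)) with hε
    have hεpos : 0 < ε := by
      apply div_pos (by linarith) (by linarith)
    set z' : Fin d → ℝ := fun j => z j + ε with hz'
    have hz'pos : ∀ j, 0 < z' j := fun j => by
      have := hz0 j; simp only [hz']; linarith
    have hz'a : ∀ a ∈ A, 0 < ∑ j, a j * z' j := by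
      intro a ha
      have hsum : ∑ j, a j * z' j = (∑ j, a j * z j) + ε * (∑ j, a j) := by
        simp only [hz', mul_add]
        rw [Finset.sum_add_distrib, ← Finset.sum_mul]
        ring
      have habs : |∑ j, a j| ≤ B := by
        rw [hB]
        exact Finset.single_le_sum (f := fun a => |∑ j, a j|)
          (fun a _ => abs_nonneg _) ha
      have h1 : ε * (∑ j, a j) ≥ -(ε * B) := by
        have := neg_abs_le (∑ j, a j)
        nlinarith
      have h2 : ε * B ≤ (-v) / 2 := by
        rw [hε]
        rw [div_mul_eq_mul_div, div_le_div_iff₀ (by linarith) (by norm_num)]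
        nlinarith
      have := hza a ha
      rw [hsum]
      nlinarith
    -- the open set
    set U : Set (Fin d → ℝ) :=
      {w : Fin d → ℝ | (∀ a ∈ A, 0 < ∑ j, a j * w j) ∧ ∀ j, 0 < w j} with hU
    have hUopen : IsOpen U := by
      have : U = (⋂ a ∈ A, {w : Fin d → ℝ | 0 < ∑ j, a j * w j}) ∩
          ⋂ j, {w : Fin d → ℝ | 0 < w j} := by
        ext w; simp [hU, Set.mem_iInter]
      rw [this]
      refine IsOpen.inter (isOpen_biInter_finset fun a _ => ?_)
        (isOpen_iInter_of_finite fun j => isOpen_lt continuous_const (continuous_apply j))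
      exact isOpen_lt continuous_const
        (continuous_finset_sum _ fun j _ => continuous_const.mul (continuous_apply j))
    have hUS : U ⊆ S := by
      intro w hw
      exact ⟨fun a ha => (hw.1 a ha).le, fun j => (hw.2 j).le⟩
    have hz'U : z' ∈ U := ⟨hz'a, hz'pos⟩
    have : z' ∈ interior S := mem_interior.mpr ⟨U, hUS, hUopen, hz'U⟩
    rw [hempty] at this
    exact this
  · -- reverse direction
    rintro ⟨η, hη0, hη1, hηle⟩
    by_contra hne
    obtain ⟨z, hzint⟩ := Set.nonempty_iff_ne_empty.2 hne
    have hSnhds : S ∈ nhds z := mem_interior_iff_mem_nhds.mp hzint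
    obtain ⟨ε, hεpos, hball⟩ := Metric.mem_nhds_iff.mp hSnhds
    -- pick w0 with positive weight
    obtain ⟨w0, hw0A, hw0ne⟩ : ∃ w0 ∈ A, η w0 ≠ 0 := by
      by_contra h
      push_neg at h
      have : (∑ w ∈ A, η w) = 0 := Finset.sum_eq_zero fun w hw => h w hw
      rw [hη1] at this; norm_num at this
    have hw0pos : 0 < η w0 := lt_of_le_of_ne (hη0 w0 hw0A) (Ne.symm hw0ne)
    -- every element of S pairs to zero with w0
    have hkey : ∀ z' ∈ S, ∑ j, w0 j * z' j = 0 := by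
      intro z' hz'
      have hTval : ∑ w ∈ A, η w * (∑ j, w j * z' j) = 0 := by
        have h1 : 0 ≤ ∑ w ∈ A, η w * (∑ j, w j * z' j) :=
          Finset.sum_nonneg fun w hw => mul_nonneg (hη0 w hw) (hz'.1 w hw)
        have heq : ∑ w ∈ A, η w * (∑ j, w j * z' j) =
            ∑ j, (∑ w ∈ A, η w * w j) * z' j := by
          simp_rw [Finset.mul_sum]
          rw [Finset.sum_comm]
          refine Finset.sum_congr rfl fun j _ => ?_
          rw [Finset.sum_mul]
          exact Finset.sum_congr rfl fun w _ => by ring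
        have h2 : ∑ j, (∑ w ∈ A, η w * w j) * z' j ≤ 0 := by
          apply Finset.sum_nonpos
          intro j _
          have ha := hηle j
          have hb := hz'.2 j
          nlinarith
        linarith [heq ▸ h1, heq ▸ h2]
      have hterm : η w0 * (∑ j, w0 j * z' j) = 0 := by
        have := (Finset.sum_eq_zero_iff_of_nonneg
          (fun w hw => mul_nonneg (hη0 w hw) (hz'.1 w hw))).mp hTval w0 hw0A
        exact this
      have := mul_eq_zero.mp hterm
      rcases this with h | h
      · exact absurd h hw0ne
      · exact h
    -- w0 ≠ 0
    have hw0nz : w0 ≠ 0 := fun h => hA (h ▸ hw0A)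
    have hnormpos : 0 < ‖w0‖ := norm_pos_iff.mpr hw0nz
    have hsqpos : 0 < ∑ j, (w0 j)^2 := by
      obtain ⟨j0, hj0⟩ := Function.ne_iff.mp hw0nz
      refine Finset.sum_pos' (fun j _ => sq_nonneg _) ⟨j0, Finset.mem_univ _, ?_⟩
      have : w0 j0 ≠ 0 := hj0
      positivity
    set t : ℝ := ε / (2 * ‖w0‖) with htdef
    have htpos : 0 < t := div_pos hεpos (by linarith)
    set zt : Fin d → ℝ := z + t • w0 with hzt
    have hztball : zt ∈ Metric.ball z ε := by
      rw [Metric.mem_ball, dist_eq_norm]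
      have : zt - z = t • w0 := by rw [hzt]; abel
      rw [this, norm_smul, Real.norm_eq_abs, abs_of_pos htpos]
      rw [htdef]
      rw [div_mul_eq_mul_div, div_lt_iff₀ (by linarith)]
      nlinarith
    have hztS : zt ∈ S := hball hztball
    have h0 := hkey zt hztS
    have hzS : z ∈ S := hball (Metric.mem_ball_self hεpos)
    have hz0 := hkey z hzS
    have hexpand : ∑ j, w0 j * zt j =
        (∑ j, w0 j * z j) + t * ∑ j, (w0 j)^2 := by
      simp only [hzt, Pi.add_apply, Pi.smul_apply, smul_eq_mul, mul_add]
      rw [Finset.sum_add_distrib, Finset.mul_sum]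
      congr 1
      exact Finset.sum_congr rfl fun j _ => by ring
    rw [hexpand, hz0, zero_add] at h0
    nlinarith
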